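/- Let x and s be block vectors of rank r with x, s ∈ int 𝓛, let μ := (1/r) xᵀs, and let η ≥ 0. If d(s, x, μ) ≤ η μ, then (1 + η) · ‖s^{-1}‖₂ ≥ ‖μ^{-1} x‖₂. -/

import Mathlib

set_option synthInstance.maxHeartbeats 1000000
set_option maxHeartbeats 1000000

noncomputable section
open scoped BigOperators

namespace SOCP

/-- `E k` is `ℝ^(k+1)`, written as `(x₀; x̄)` with `x̄ ∈ ℝ^k`. -/
abbrev E (k : ℕ) := EuclideanSpace ℝ (Fin (k + 1))

/-- Build an element of `E k` from a plain function. -/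
def mk {k : ℕ} (f : Fin (k + 1) → ℝ) : E k := (WithLp.equiv 2 _).symm f

/-- The Euclidean norm `‖x̄‖` of the tail of `x`. -/
def tnorm {k : ℕ} (x : E k) : ℝ := Real.sqrt (∑ i : Fin k, (x i.succ) ^ 2)

/-- First Jordan eigenvalue `λ₁(x) = x₀ + ‖x̄‖`. -/
def lam1 {k : ℕ} (x : E k) : ℝ := x 0 + tnorm x

/-- Second Jordan eigenvalue `λ₂(x) = x₀ − ‖x̄‖`. -/
def lam2 {k : ℕ} (x : E k) : ℝ := x 0 - tnorm x

/-- Jordan product `x ∘ y = (xᵀy; x₀ȳ + y₀x̄)`. -/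
def jmul {k : ℕ} (x y : E k) : E k :=
  mk (fun j => if j = 0 then ∑ i, x i * y i else x 0 * y j + y 0 * x j)

/-- The Jordan identity `e = (1; 0)`. -/
def idE {k : ℕ} : E k := mk (fun j => if j = 0 then 1 else 0)

/-- First Jordan frame vector `c₁(x) = ½(1; x̄/‖x̄‖)`. -/
def c1 {k : ℕ} (x : E k) : E k :=
  mk (fun j => if j = 0 then 1 / 2 else x j / (2 * tnorm x))

/-- Second Jordan frame vector `c₂(x) = ½(1; −x̄/‖x̄‖)`. -/
def c2 {k : ℕ} (x : E k) : E k :=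
  mk (fun j => if j = 0 then 1 / 2 else -x j / (2 * tnorm x))

/-- Arrowhead matrix `Arw(x) = [[x₀, x̄ᵀ], [x̄, x₀ I]]`. -/
def Arw {k : ℕ} (x : E k) : Matrix (Fin (k + 1)) (Fin (k + 1)) ℝ :=
  Matrix.of fun i j =>
    if i = 0 then x j else if j = 0 then x i else if i = j then x 0 else 0

/-- Quadratic representation `Q_x = 2 Arw(x)² − Arw(x ∘ x)`. -/
def Qmat {k : ℕ} (x : E k) : Matrix (Fin (k + 1)) (Fin (k + 1)) ℝ :=
  (2 : ℝ) • (Arw x * Arw x) - Arw (jmul x x)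

/-- Jordan square root `x^{1/2} = √λ₁ c₁ + √λ₂ c₂` (equal to `(√x₀; 0)` when `x̄ = 0`). -/
def jsqrt {k : ℕ} (x : E k) : E k :=
  if tnorm x = 0 then mk (fun j => if j = 0 then Real.sqrt (x 0) else 0)
  else Real.sqrt (lam1 x) • c1 x + Real.sqrt (lam2 x) • c2 x

/-- `T_x := Q_{x^{1/2}}`. -/
def Tmat {k : ℕ} (x : E k) : Matrix (Fin (k + 1)) (Fin (k + 1)) ℝ := Qmat (jsqrt x)

/-- Jordan inverse `x⁻¹ = λ₁⁻¹ c₁ + λ₂⁻¹ c₂` (equal to `(x₀⁻¹; 0)` when `x̄ = 0`). -/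
def jinv {k : ℕ} (x : E k) : E k :=
  if tnorm x = 0 then mk (fun j => if j = 0 then (x 0)⁻¹ else 0)
  else (lam1 x)⁻¹ • c1 x + (lam2 x)⁻¹ • c2 x

/-- Matrix-vector product, as a map on `E k`. -/
def mulVecE {k : ℕ} (M : Matrix (Fin (k + 1)) (Fin (k + 1)) ℝ) (v : E k) : E k :=
  mk (M.mulVec (WithLp.equiv 2 _ v))

/-- Block vectors `x = (x₁; …; x_r)` with `x_i ∈ ℝ^{d i + 2}` (so each block has dim ≥ 2). -/
abbrev BV {r : ℕ} (d : Fin r → ℕ) : Type := (i : Fin r) → E (d i + 1)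

variable {r : ℕ} {d : Fin r → ℕ}

/-- Spectral norm `‖x‖₂ = max_i (|x_{i,0}| + ‖x̄_i‖)`. -/
def specNorm (x : BV d) : ℝ := ⨆ i, (|x i 0| + tnorm (x i))

/-- Frobenius norm `‖x‖_F = √(Σ_i (λ₁(x_i)² + λ₂(x_i)²))`. -/
def frobNorm (x : BV d) : ℝ := Real.sqrt (∑ i, (lam1 (x i) ^ 2 + lam2 (x i) ^ 2))

/-- Minimum Jordan eigenvalue `λ_min(x) = min_i λ₂(x_i)`. -/
def lamMin (x : BV d) : ℝ := ⨅ i, lam2 (x i)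

/-- Blockwise Jordan product. -/
def jmulB (x y : BV d) : BV d := fun i => jmul (x i) (y i)

/-- Block identity element. -/
def idB : BV d := fun _ => idE

/-- Membership in the interior of the product of Lorentz cones: `‖x̄_i‖ < x_{i,0}` for all `i`. -/
def inIntLB (x : BV d) : Prop := ∀ i, tnorm (x i) < x i 0

/-- Euclidean inner product of the concatenated vectors. -/
def ip (x y : BV d) : ℝ := ∑ i, ∑ j, x i j * y i j

/-- Block-diagonal application of `T_x`: `(T_x s)_i = T_{x_i} s_i`. -/
def TB (x s : BV d) : BV d := fun i => mulVecE (Tmat (x i)) (s i)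

/-- Distance from the central path `d(x, s, ν) = ‖T_x s − ν e‖_F`. -/
def cdist (x s : BV d) (ν : ℝ) : ℝ := frobNorm (TB x s - ν • (idB : BV d))

/-- Blockwise Jordan inverse. -/
def jinvB (x : BV d) : BV d := fun i => jinv (x i)

set_option linter.dupNamespace false
set_option linter.unusedVariables false
variable {k : ℕ}

lemma mk_apply (f : Fin (k+1) → ℝ) (j : Fin (k+1)) : mk f j = f j := rfl

lemma tnorm_nonneg (x : E k) : 0 ≤ tnorm x := Real.sqrt_nonneg _

lemma tnorm_sq (x : E k) : tnorm x ^ 2 = ∑ i : Fin k, (x i.succ) ^ 2 :=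
  Real.sq_sqrt (Finset.sum_nonneg fun i _ => sq_nonneg _)

lemma tnorm_congr (x y : E k) (h : ∀ j : Fin k, x j.succ = y j.succ) : tnorm x = tnorm y := by
  unfold tnorm; simp only [h]

lemma tnorm_tail_smul (x y : E k) (c : ℝ) (h : ∀ j : Fin k, y j.succ = c * x j.succ) :
    tnorm y = |c| * tnorm x := by
  unfold tnorm
  simp only [h, mul_pow, ← Finset.mul_sum]
  rw [Real.sqrt_mul (sq_nonneg c), Real.sqrt_sq_eq_abs]

lemma tail_eq_zero_of_tnorm_eq_zero {x : E k} (h : tnorm x = 0) (j : Fin k) : x j.succ = 0 := by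
  have h2 : tnorm x ^ 2 = 0 := by rw [h]; ring
  rw [tnorm_sq] at h2
  have := (Finset.sum_eq_zero_iff_of_nonneg (fun i _ => sq_nonneg (x i.succ))).1 h2 j (Finset.mem_univ j)
  exact pow_eq_zero_iff (n := 2) (by norm_num) |>.1 this

lemma tail_cs (x y : E k) : |∑ j : Fin k, x j.succ * y j.succ| ≤ tnorm x * tnorm y := by
  have h := Finset.sum_mul_sq_le_sq_mul_sq Finset.univ (fun j : Fin k => x j.succ) (fun j => y j.succ)
  have h2 : (|∑ j : Fin k, x j.succ * y j.succ|) ^ 2 ≤ (tnorm x * tnorm y) ^ 2 := by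
    rw [sq_abs, mul_pow, tnorm_sq, tnorm_sq]; exact h
  have h3 := Real.sqrt_le_sqrt h2
  rwa [Real.sqrt_sq (abs_nonneg _), Real.sqrt_sq (mul_nonneg (tnorm_nonneg x) (tnorm_nonneg y))] at h3

lemma arw_mulVec (u : E k) (v : Fin (k+1) → ℝ) (j : Fin (k+1)) :
    (Arw u).mulVec v j = if j = 0 then ∑ i, u i * v i else u 0 * v j + v 0 * u j := by
  unfold Arw Matrix.mulVec dotProduct
  by_cases hj : j = 0
  · simp [hj]
  · simp only [Matrix.of_apply, hj, if_false]
    have hsub : Finset.sum Finset.univ (fun i => (if i = 0 then u j else if j = i then u 0 else 0) * v i)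
        = Finset.sum {0, j} (fun i => (if i = 0 then u j else if j = i then u 0 else 0) * v i) := by
      refine (Finset.sum_subset (Finset.subset_univ _) ?_).symm
      intro i _ hi
      simp only [Finset.mem_insert, Finset.mem_singleton, not_or] at hi
      simp only [hi.1, if_false]
      rw [if_neg (fun h => hi.2 h.symm), zero_mul]
    rw [hsub, Finset.sum_pair (Ne.symm hj)]
    simp [hj, Ne.symm hj]
    ring

lemma mulVecE_apply (M : Matrix (Fin (k+1)) (Fin (k+1)) ℝ) (v : E k) (j : Fin (k+1)) :
    mulVecE M v j = M.mulVec (fun i => v i) j := rfl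

lemma qmat_mulVec_zero (u x : E k) :
    mulVecE (Qmat u) x 0 =
      2 * u 0 * (∑ i, u i * x i) - (u 0 ^ 2 - ∑ i : Fin k, u i.succ ^ 2) * x 0 := by
  have expand : mulVecE (Qmat u) x 0 =
      2 * ((Arw u).mulVec ((Arw u).mulVec (fun i => x i)) 0) - (Arw (jmul u u)).mulVec (fun i => x i) 0 := by
    rw [mulVecE_apply]
    unfold Qmat
    rw [Matrix.sub_mulVec, Matrix.smul_mulVec, ← Matrix.mulVec_mulVec]
    simp [Pi.smul_apply]
  rw [expand]
  have h2 : ∀ i : Fin (k+1), jmul u u i = if i = 0 then ∑ i, u i * u i else u 0 * u i + u 0 * u i := by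
    intro i; rfl
  simp only [arw_mulVec, h2]
  simp only [Fin.sum_univ_succ, Fin.succ_ne_zero, if_false, if_true, reduceIte, mul_ite]
  simp only [mul_add, add_mul, Finset.sum_add_distrib, Finset.mul_sum, pow_two]
  ring_nf
  have e1 : ∑ i : Fin k, 2 * u i.succ * x 0 * u i.succ = 2 * x 0 * ∑ i : Fin k, u i.succ * u i.succ := by
    rw [Finset.mul_sum]; exact Finset.sum_congr rfl fun i _ => by ring
  have e2 : ∑ i : Fin k, 2 * u i.succ * u 0 * x i.succ = 2 * u 0 * ∑ i : Fin k, u i.succ * x i.succ := by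
    rw [Finset.mul_sum]; exact Finset.sum_congr rfl fun i _ => by ring
  have e3 : ∑ i : Fin k, u 0 * u i.succ * x i.succ * 2 = 2 * u 0 * ∑ i : Fin k, u i.succ * x i.succ := by
    rw [Finset.mul_sum]; exact Finset.sum_congr rfl fun i _ => by ring
  have e4 : ∑ i : Fin k, u i.succ * u i.succ = ∑ i : Fin k, u i.succ ^ 2 :=
    Finset.sum_congr rfl fun i _ => by ring
  have e5 : ∑ i : Fin k, u 0 * u i.succ * x i.succ = u 0 * ∑ i : Fin k, u i.succ * x i.succ := by
    rw [Finset.mul_sum]; exact Finset.sum_congr rfl fun i _ => by ring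
  have e6 : ∑ i : Fin k, u 0 * 2 * u i.succ * x i.succ = 2 * u 0 * ∑ i : Fin k, u i.succ * x i.succ := by
    rw [Finset.mul_sum]; exact Finset.sum_congr rfl fun i _ => by ring
  simp only [← Finset.sum_mul, ← Finset.mul_sum]
  ring

lemma qmat_mulVec_succ (u x : E k) (j : Fin k) :
    mulVecE (Qmat u) x j.succ =
      2 * (∑ i, u i * x i) * u j.succ + (u 0 ^ 2 - ∑ i : Fin k, u i.succ ^ 2) * x j.succ := by
  have expand : mulVecE (Qmat u) x j.succ =
      2 * ((Arw u).mulVec ((Arw u).mulVec (fun i => x i)) j.succ) - (Arw (jmul u u)).mulVec (fun i => x i) j.succ := by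
    rw [mulVecE_apply]
    unfold Qmat
    rw [Matrix.sub_mulVec, Matrix.smul_mulVec, ← Matrix.mulVec_mulVec]
    simp [Pi.smul_apply]
  rw [expand]
  have h2 : ∀ i : Fin (k+1), jmul u u i = if i = 0 then ∑ i, u i * u i else u 0 * u i + u 0 * u i := by
    intro i; rfl
  simp only [arw_mulVec, h2]
  simp only [Fin.sum_univ_succ, Fin.succ_ne_zero, if_false, if_true, reduceIte, mul_ite]
  have e4 : ∑ i : Fin k, u i.succ * u i.succ = ∑ i : Fin k, u i.succ ^ 2 :=
    Finset.sum_congr rfl fun i _ => by ring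
  rw [e4]
  ring

lemma tnorm_eq_zero_of_tail (x : E k) (h : ∀ j : Fin k, x j.succ = 0) : tnorm x = 0 := by
  unfold tnorm; simp [h]

lemma jsqrt_spec (s : E k) (hs : tnorm s < s 0) :
    tnorm (jsqrt s) ≤ jsqrt s 0 ∧ (jsqrt s 0 - tnorm (jsqrt s)) ^ 2 = lam2 s := by
  have hts : 0 ≤ tnorm s := tnorm_nonneg s
  have hlam2 : 0 ≤ lam2 s := by unfold lam2; linarith
  have hlam1 : lam2 s ≤ lam1 s := by unfold lam1 lam2; linarith
  by_cases h0 : tnorm s = 0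
  · unfold jsqrt
    rw [if_pos h0]
    have htail : ∀ j : Fin k, (mk (fun j => if j = (0 : Fin (k+1)) then Real.sqrt (s 0) else 0) : E k) j.succ = 0 := by
      intro j; rw [mk_apply, if_neg (Fin.succ_ne_zero j)]
    rw [tnorm_eq_zero_of_tail _ htail, mk_apply, if_pos rfl]
    constructor
    · exact Real.sqrt_nonneg _
    · rw [sub_zero, Real.sq_sqrt (by linarith)]
      unfold lam2; rw [h0]; ring
  · unfold jsqrt
    rw [if_neg h0]
    have htpos : 0 < tnorm s := lt_of_le_of_ne hts (Ne.symm h0)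
    have hsq : Real.sqrt (lam2 s) ≤ Real.sqrt (lam1 s) := Real.sqrt_le_sqrt hlam1
    have happ : ∀ j : Fin (k+1),
        (Real.sqrt (lam1 s) • c1 s + Real.sqrt (lam2 s) • c2 s : E k) j
          = Real.sqrt (lam1 s) * c1 s j + Real.sqrt (lam2 s) * c2 s j := by
      intro j
      simp [PiLp.add_apply, PiLp.smul_apply, smul_eq_mul]
    have h00 : (Real.sqrt (lam1 s) • c1 s + Real.sqrt (lam2 s) • c2 s : E k) 0
        = (Real.sqrt (lam1 s) + Real.sqrt (lam2 s)) / 2 := by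
      rw [happ 0]
      unfold c1 c2
      rw [mk_apply, mk_apply, if_pos rfl, if_pos rfl]
      ring
    have htn : tnorm (Real.sqrt (lam1 s) • c1 s + Real.sqrt (lam2 s) • c2 s : E k)
        = (Real.sqrt (lam1 s) - Real.sqrt (lam2 s)) / 2 := by
      have := tnorm_tail_smul s (Real.sqrt (lam1 s) • c1 s + Real.sqrt (lam2 s) • c2 s : E k)
        ((Real.sqrt (lam1 s) - Real.sqrt (lam2 s)) / (2 * tnorm s)) ?_
      · rw [this, abs_of_nonneg (div_nonneg (by linarith) (by linarith))]
        field_simp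
      · intro j
        rw [happ j.succ]
        unfold c1 c2
        rw [mk_apply, mk_apply, if_neg (Fin.succ_ne_zero j), if_neg (Fin.succ_ne_zero j)]
        field_simp
        ring
    rw [h00, htn]
    constructor
    · have := Real.sqrt_nonneg (lam2 s)
      linarith
    · have : (Real.sqrt (lam1 s) + Real.sqrt (lam2 s)) / 2
          - (Real.sqrt (lam1 s) - Real.sqrt (lam2 s)) / 2 = Real.sqrt (lam2 s) := by ring
      rw [this, Real.sq_sqrt hlam2]

lemma jinv_spec (s : E k) (hs : tnorm s < s 0) :
    |jinv s 0| + tnorm (jinv s) = (lam2 s)⁻¹ := by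
  have hts : 0 ≤ tnorm s := tnorm_nonneg s
  have hlam2 : 0 < lam2 s := by unfold lam2; linarith
  have hlam1 : 0 < lam1 s := by unfold lam1; linarith
  have hle : lam2 s ≤ lam1 s := by unfold lam1 lam2; linarith
  have hinvle : (lam1 s)⁻¹ ≤ (lam2 s)⁻¹ := one_div_le_one_div_of_le hlam2 hle |>.trans_eq (one_div _) |>.trans_eq' (one_div _)
  by_cases h0 : tnorm s = 0
  · unfold jinv
    rw [if_pos h0]
    have htail : ∀ j : Fin k, (mk (fun j => if j = (0 : Fin (k+1)) then (s 0)⁻¹ else 0) : E k) j.succ = 0 := by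
      intro j; rw [mk_apply, if_neg (Fin.succ_ne_zero j)]
    rw [tnorm_eq_zero_of_tail _ htail, mk_apply, if_pos rfl]
    have hs0 : (0:ℝ) < s 0 := by linarith
    rw [abs_of_nonneg (inv_nonneg.2 hs0.le), add_zero]
    unfold lam2; rw [h0, sub_zero]
  · unfold jinv
    rw [if_neg h0]
    have htpos : 0 < tnorm s := lt_of_le_of_ne hts (Ne.symm h0)
    have happ : ∀ j : Fin (k+1),
        ((lam1 s)⁻¹ • c1 s + (lam2 s)⁻¹ • c2 s : E k) j
          = (lam1 s)⁻¹ * c1 s j + (lam2 s)⁻¹ * c2 s j := by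
      intro j
      simp [PiLp.add_apply, PiLp.smul_apply, smul_eq_mul]
    have h00 : ((lam1 s)⁻¹ • c1 s + (lam2 s)⁻¹ • c2 s : E k) 0
        = ((lam1 s)⁻¹ + (lam2 s)⁻¹) / 2 := by
      rw [happ 0]
      unfold c1 c2
      rw [mk_apply, mk_apply, if_pos rfl, if_pos rfl]
      ring
    have htn : tnorm ((lam1 s)⁻¹ • c1 s + (lam2 s)⁻¹ • c2 s : E k)
        = ((lam2 s)⁻¹ - (lam1 s)⁻¹) / 2 := by
      have := tnorm_tail_smul s ((lam1 s)⁻¹ • c1 s + (lam2 s)⁻¹ • c2 s : E k)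
        (((lam1 s)⁻¹ - (lam2 s)⁻¹) / (2 * tnorm s)) ?_
      · rw [this, abs_div, abs_of_nonpos (by linarith), abs_of_nonneg (by linarith)]
        field_simp
        ring
      · intro j
        rw [happ j.succ]
        unfold c1 c2
        rw [mk_apply, mk_apply, if_neg (Fin.succ_ne_zero j), if_neg (Fin.succ_ne_zero j)]
        field_simp
        ring
    have i1 : 0 ≤ (lam1 s)⁻¹ := inv_nonneg.2 hlam1.le
    have i2 : 0 ≤ (lam2 s)⁻¹ := inv_nonneg.2 hlam2.le
    rw [h00, htn, abs_of_nonneg (by linarith)]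
    ring

lemma block_key (s x : E k) (hs : tnorm s < s 0) (hx : tnorm x < x 0) :
    lam2 s * lam1 x ≤ lam1 (mulVecE (Tmat s) x) := by
  set u : E k := jsqrt s with hu
  obtain ⟨hah, hsq2⟩ := jsqrt_spec s hs
  rw [← hu] at hah hsq2
  set a : ℝ := u 0 with ha
  set h : ℝ := tnorm u with hh
  set m : ℝ := tnorm x with hm
  set w : E k := mulVecE (Tmat s) x with hw
  have hh0 : 0 ≤ h := tnorm_nonneg u
  have hm0 : 0 ≤ m := tnorm_nonneg x
  have hx0 : m ≤ x 0 := hx.le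
  set p : ℝ := ∑ i, u i * x i with hp
  set t : ℝ := ∑ j : Fin k, u j.succ * x j.succ with ht
  have hpt : p = a * x 0 + t := by rw [hp, Fin.sum_univ_succ]
  have hqh : ∑ i : Fin k, u i.succ ^ 2 = h ^ 2 := (tnorm_sq u).symm
  have hw0 : w 0 = 2 * a * p - (a ^ 2 - h ^ 2) * x 0 := by
    rw [hw]
    show mulVecE (Qmat u) x 0 = _
    rw [qmat_mulVec_zero, hqh]
  have hwsucc : ∀ j : Fin k, w j.succ = 2 * p * u j.succ + (a ^ 2 - h ^ 2) * x j.succ := by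
    intro j
    rw [hw]
    show mulVecE (Qmat u) x j.succ = _
    rw [qmat_mulVec_succ, hqh]
  have htb : |t| ≤ h * m := tail_cs u x
  have hwt0 : 0 ≤ tnorm w := tnorm_nonneg w
  have hxs : ∑ j : Fin k, (x j.succ) ^ 2 = m ^ 2 := (tnorm_sq x).symm
  have hcs : 2 * p * t + (a ^ 2 - h ^ 2) * m ^ 2 ≤ m * tnorm w := by
    have h1 : ∑ j : Fin k, x j.succ * w j.succ = 2 * p * t + (a ^ 2 - h ^ 2) * m ^ 2 := by
      calc ∑ j : Fin k, x j.succ * w j.succ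
          = ∑ j : Fin k, (2 * p * (u j.succ * x j.succ) + (a ^ 2 - h ^ 2) * (x j.succ ^ 2)) := by
            exact Finset.sum_congr rfl fun j _ => by rw [hwsucc]; ring
        _ = 2 * p * (∑ j : Fin k, u j.succ * x j.succ) + (a ^ 2 - h ^ 2) * ∑ j : Fin k, x j.succ ^ 2 := by
            rw [Finset.sum_add_distrib, ← Finset.mul_sum, ← Finset.mul_sum]
        _ = 2 * p * t + (a ^ 2 - h ^ 2) * m ^ 2 := by rw [hxs, ← ht]
    have h2 : ∑ j : Fin k, x j.succ * w j.succ ≤ m * tnorm w :=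
      le_trans (le_abs_self _) (tail_cs x w)
    linarith
  have hgoal : lam2 s * lam1 x = (a - h) ^ 2 * (x 0 + m) := by
    rw [← hsq2]; unfold lam1; rfl
  rw [hgoal]
  have hlw : lam1 w = w 0 + tnorm w := rfl
  rw [hlw, hw0]
  rcases eq_or_lt_of_le hm0 with hm0' | hm0'
  · -- m = 0
    have ht0 : t = 0 := by
      have h3 : |t| ≤ 0 := by rw [← hm0'] at htb; linarith
      simpa [abs_nonpos_iff] using h3
    rw [← hm0', hpt, ht0]
    nlinarith [mul_nonneg (mul_nonneg (by linarith : (0:ℝ) ≤ a) hh0) (by linarith : (0:ℝ) ≤ x 0)]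
  · -- m > 0
    have hA : 0 ≤ t + h * m := by
      have := neg_abs_le t; linarith
    have hB : 0 ≤ 2 * a * m + t - h * m := by
      have h4 := neg_abs_le t
      nlinarith [mul_le_mul_of_nonneg_right hah hm0]
    have key : (a - h) ^ 2 * (x 0 + m) * m
        ≤ (2 * a * p - (a ^ 2 - h ^ 2) * x 0) * m + (2 * p * t + (a ^ 2 - h ^ 2) * m ^ 2) := by
      rw [hpt]
      linarith [mul_nonneg (mul_nonneg (by linarith : (0:ℝ) ≤ a) hA) (by linarith : (0:ℝ) ≤ x 0 - m),
        mul_nonneg hA hB]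
    exact le_of_mul_le_mul_right (by linarith [hcs, key]) hm0'

lemma bv_sub_apply {r : ℕ} {d : Fin r → ℕ} (A B : BV d) (i : Fin r) (j : Fin (d i + 2)) :
    (A - B) i j = A i j - B i j := rfl

lemma bv_smul_apply {r : ℕ} {d : Fin r → ℕ} (c : ℝ) (A : BV d) (i : Fin r) (j : Fin (d i + 2)) :
    (c • A) i j = c * A i j := rfl

lemma ip_pos {r : ℕ} {d : Fin r → ℕ} (x s : BV d) (hx : inIntLB x) (hs : inIntLB s)
    (hr : 0 < r) : 0 < ip x s := by
  haveI : Nonempty (Fin r) := Fin.pos_iff_nonempty.1 hr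
  unfold ip
  apply Finset.sum_pos _ Finset.univ_nonempty
  intro i _
  have hxi := hx i
  have hsi := hs i
  have hcs := tail_cs (x i) (s i)
  have h1 := tnorm_nonneg (x i)
  have h2 := tnorm_nonneg (s i)
  have h3 := neg_abs_le (∑ j : Fin (d i + 1), x i j.succ * s i j.succ)
  rw [Fin.sum_univ_succ]
  nlinarith [mul_pos (show (0:ℝ) < x i 0 - tnorm (x i) by linarith)
      (show (0:ℝ) < s i 0 by linarith),
    mul_nonneg h1 (show (0:ℝ) ≤ s i 0 - tnorm (s i) by linarith)]

lemma lam1_sub_le_frob {r : ℕ} {d : Fin r → ℕ} (y : BV d) (i : Fin r) :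
    lam1 (y i) ≤ frobNorm y := by
  have h1 : lam1 (y i) ^ 2 ≤ ∑ j, (lam1 (y j) ^ 2 + lam2 (y j) ^ 2) := by
    calc lam1 (y i) ^ 2 ≤ lam1 (y i) ^ 2 + lam2 (y i) ^ 2 := by nlinarith [sq_nonneg (lam2 (y i))]
      _ ≤ _ := Finset.single_le_sum (f := fun j => lam1 (y j) ^ 2 + lam2 (y j) ^ 2)
          (fun j _ => by positivity) (Finset.mem_univ i)
  have h2 := Real.sqrt_le_sqrt h1
  rw [Real.sqrt_sq_eq_abs] at h2
  exact le_trans (le_abs_self _) h2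

theorem specNorm_bound_aux {r : ℕ} {d : Fin r → ℕ} (hr : 0 < r)
    (x s : BV d) (hx : inIntLB x) (hs : inIntLB s) (η : ℝ) (hη : 0 ≤ η)
    (hd : cdist s x (ip x s / r) ≤ η * (ip x s / r)) :
    specNorm ((ip x s / r)⁻¹ • x) ≤ (1 + η) * specNorm (jinvB s) := by
  haveI : Nonempty (Fin r) := Fin.pos_iff_nonempty.1 hr
  set μ : ℝ := ip x s / r with hμdef
  have hμ : 0 < μ := div_pos (ip_pos x s hx hs hr) (by exact_mod_cast hr)
  -- bound on lam1 of TB s x blocks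
  have key : ∀ i, lam1 (TB s x i) ≤ (1 + η) * μ := by
    intro i
    set y : BV d := TB s x - μ • (idB : BV d) with hy
    have hyt : tnorm (y i) = tnorm (TB s x i) := by
      apply tnorm_congr
      intro j
      rw [hy, bv_sub_apply, bv_smul_apply]
      have : idB (d := d) i j.succ = 0 := by
        show (idE : E (d i + 1)) j.succ = 0
        unfold idE
        rw [mk_apply, if_neg (Fin.succ_ne_zero j)]
      rw [this, mul_zero, sub_zero]
    have hy0 : y i 0 = TB s x i 0 - μ := by
      have h2 : idB (d := d) i 0 = 1 := by
        show (idE : E (d i + 1)) 0 = 1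
        unfold idE
        rw [mk_apply, if_pos rfl]
      rw [hy, bv_sub_apply, bv_smul_apply, h2, mul_one]
    have hfr : lam1 (y i) ≤ frobNorm y := lam1_sub_le_frob y i
    have hcd : frobNorm y = cdist s x μ := rfl
    have hl : lam1 (y i) = lam1 (TB s x i) - μ := by
      unfold lam1
      rw [hy0, hyt]
      ring
    rw [hl] at hfr
    rw [hcd] at hfr
    linarith
  -- assemble
  unfold specNorm
  apply ciSup_le
  intro i
  have hxi := hx i
  have hsi := hs i
  have htx := tnorm_nonneg (x i)
  have hl2 : 0 < lam2 (s i) := by unfold lam2; have := tnorm_nonneg (s i); linarith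
  have hblock : lam2 (s i) * lam1 (x i) ≤ (1 + η) * μ :=
    le_trans (block_key (s i) (x i) hsi hxi) (key i)
  have hlx : 0 < lam1 (x i) := by unfold lam1; linarith
  -- LHS term
  have e0 : (μ⁻¹ • x) i 0 = μ⁻¹ * x i 0 := bv_smul_apply μ⁻¹ x i 0
  have et : tnorm ((μ⁻¹ • x) i) = |μ⁻¹| * tnorm (x i) :=
    tnorm_tail_smul (x i) ((μ⁻¹ • x) i) μ⁻¹ (fun j => bv_smul_apply μ⁻¹ x i j.succ)
  have hinv : (0:ℝ) ≤ μ⁻¹ := inv_nonneg.2 hμ.le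
  have lhs_eq : |(μ⁻¹ • x) i 0| + tnorm ((μ⁻¹ • x) i) = μ⁻¹ * lam1 (x i) := by
    rw [e0, et, abs_of_nonneg hinv, abs_of_nonneg (mul_nonneg hinv (by linarith))]
    unfold lam1
    ring
  rw [lhs_eq]
  have step1 : μ⁻¹ * lam1 (x i) ≤ (1 + η) * (lam2 (s i))⁻¹ := by
    have hdiv : lam1 (x i) / μ ≤ (1 + η) / lam2 (s i) := by
      rw [div_le_div_iff₀ hμ hl2]
      linarith [mul_comm (lam2 (s i)) (lam1 (x i)), hblock]
    calc μ⁻¹ * lam1 (x i) = lam1 (x i) / μ := by ring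
      _ ≤ (1 + η) / lam2 (s i) := hdiv
      _ = (1 + η) * (lam2 (s i))⁻¹ := by ring
  have step2 : (lam2 (s i))⁻¹ ≤ specNorm (jinvB s) := by
    have hj : |jinvB s i 0| + tnorm (jinvB s i) = (lam2 (s i))⁻¹ := jinv_spec (s i) hsi
    rw [← hj]
    unfold specNorm
    exact le_ciSup (f := fun i' => |jinvB s i' 0| + tnorm (jinvB s i'))
      (Set.Finite.bddAbove (Set.finite_range _)) i
  calc μ⁻¹ * lam1 (x i) ≤ (1 + η) * (lam2 (s i))⁻¹ := step1
    _ ≤ (1 + η) * specNorm (jinvB s) := by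
        apply mul_le_mul_of_nonneg_left step2 (by linarith)

/-- If `μ = (1/r) xᵀs` and `d(s, x, μ) ≤ ημ`, then
`(1 + η)·‖s⁻¹‖₂ ≥ ‖μ⁻¹ x‖₂`. -/
theorem specNorm_bound_near_central_path {r : ℕ} {d : Fin r → ℕ} (hr : 0 < r)
    (x s : BV d) (hx : inIntLB x) (hs : inIntLB s) (η : ℝ) (hη : 0 ≤ η)
    (hd : cdist s x (ip x s / r) ≤ η * (ip x s / r)) :
    specNorm ((ip x s / r)⁻¹ • x) ≤ (1 + η) * specNorm (jinvB s) := by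
  exact specNorm_bound_aux hr x s hx hs η hη hd

end SOCP
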